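/- With ν₁, ν₂ g-orthogonal unit spatial hybrid numbers of signs δ₁, δ₂, and m, n ∈ ℝ with σ := sgn(δ₁m² + δ₂n²) ≠ 0, define n₁ = (σδ₁m ν₁ + σδ₂n ν₂)/√(σ(δ₁m² + δ₂n²)) and n₂ = (-n ν₁ + m ν₂)/√(σ(δ₁m² + δ₂n²)). Then g(n₁,n₁) = σ, g(n₂,n₂) = σδ₁δ₂, g(n₁,n₂) = 0, and n₁n₂ = ν₁ν₂. -/

import Mathlib

open Real Matrix

noncomputable section

/-- Scalar product on the spatial hybrid number space, coordinates (b,c,d). -/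
def g (x y : Fin 3 → ℝ) : ℝ := x 0 * y 0 - x 0 * y 1 - y 0 * x 1 - x 2 * y 2

/-- Hybridian product of g-orthogonal spatial hybrid numbers. -/
def hprod (x y : Fin 3 → ℝ) : Fin 3 → ℝ :=
  ![x 0 * y 2 - y 0 * x 2, x 0 * y 2 - y 0 * x 2 - x 1 * y 2 + y 1 * x 2,
    y 0 * x 1 - x 0 * y 1]

/-- Gram matrix of g. -/
def Gmat : Matrix (Fin 3) (Fin 3) ℝ := !![1, -1, 0; -1, 0, 0; 0, 0, -1]

lemma g_bilin (x y : Fin 3 → ℝ) (a b c d : ℝ) :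
    g (a • x + b • y) (c • x + d • y)
      = a * c * g x x + (a * d + b * c) * g x y + b * d * g y y := by
  simp only [g, Pi.add_apply, Pi.smul_apply, smul_eq_mul]
  ring

lemma hprod_bilin (x y : Fin 3 → ℝ) (a b c d : ℝ) :
    hprod (a • x + b • y) (c • x + d • y) = (a * d - b * c) • hprod x y := by
  funext i
  fin_cases i <;> simp [hprod] <;> ring

/-- Rotating the g-orthogonal pair (ν₁,ν₂) by the matrix built from m, n
yields another orthogonal pair (n₁,n₂) with g(n₁,n₁) = σ,
g(n₂,n₂) = σδ₁δ₂, g(n₁,n₂) = 0 and n₁n₂ = ν₁ν₂. -/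
theorem stmt6 (ν₁ ν₂ : Fin 3 → ℝ) (δ₁ δ₂ m n σ : ℝ)
    (hδ₁ : δ₁ = 1 ∨ δ₁ = -1) (hδ₂ : δ₂ = 1 ∨ δ₂ = -1)
    (h₁ : g ν₁ ν₁ = δ₁) (h₂ : g ν₂ ν₂ = δ₂) (h₁₂ : g ν₁ ν₂ = 0)
    (hmn : δ₁ * m ^ 2 + δ₂ * n ^ 2 ≠ 0)
    (hσ : σ = Real.sign (δ₁ * m ^ 2 + δ₂ * n ^ 2)) :
    let r : ℝ := Real.sqrt (σ * (δ₁ * m ^ 2 + δ₂ * n ^ 2))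
    let n₁ : Fin 3 → ℝ := (σ * δ₁ * m / r) • ν₁ + (σ * δ₂ * n / r) • ν₂
    let n₂ : Fin 3 → ℝ := (-n / r) • ν₁ + (m / r) • ν₂
    g n₁ n₁ = σ ∧ g n₂ n₂ = σ * δ₁ * δ₂ ∧ g n₁ n₂ = 0 ∧
    hprod n₁ n₂ = hprod ν₁ ν₂ := by
  intro r n₁ n₂
  have hσ1 : σ = 1 ∨ σ = -1 := by
    rcases lt_or_gt_of_ne hmn with h | h
    · right; rw [hσ, Real.sign_of_neg h]
    · left; rw [hσ, Real.sign_of_pos h]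
  have hσE : 0 < σ * (δ₁ * m ^ 2 + δ₂ * n ^ 2) := by
    rcases lt_or_gt_of_ne hmn with h | h
    · rw [hσ, Real.sign_of_neg h]; nlinarith
    · rw [hσ, Real.sign_of_pos h]; nlinarith
  have hr2 : r ^ 2 = σ * (δ₁ * m ^ 2 + δ₂ * n ^ 2) := Real.sq_sqrt hσE.le
  have hr : r ≠ 0 := (Real.sqrt_pos.mpr hσE).ne'
  have hr2' : r * r = σ * (δ₁ * m ^ 2 + δ₂ * n ^ 2) := by rw [← hr2]; ring
  have hd1 : δ₁ ^ 2 = 1 := by rcases hδ₁ with h | h <;> rw [h] <;> ring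
  have hd2 : δ₂ ^ 2 = 1 := by rcases hδ₂ with h | h <;> rw [h] <;> ring
  refine ⟨?_, ?_, ?_, ?_⟩
  · rw [show n₁ = (σ * δ₁ * m / r) • ν₁ + (σ * δ₂ * n / r) • ν₂ from rfl,
      g_bilin, h₁, h₂, h₁₂]
    field_simp
    rcases hσ1 with h | h <;> rcases hδ₁ with h1 | h1 <;> rcases hδ₂ with h2 | h2 <;>
      subst h <;> subst h1 <;> subst h2 <;> linarith [hr2']
  · rw [show n₂ = (-n / r) • ν₁ + (m / r) • ν₂ from rfl, g_bilin, h₁, h₂, h₁₂]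
    field_simp
    rcases hσ1 with h | h <;> rcases hδ₁ with h1 | h1 <;> rcases hδ₂ with h2 | h2 <;>
      subst h <;> subst h1 <;> subst h2 <;> linarith [hr2']
  · rw [show n₁ = (σ * δ₁ * m / r) • ν₁ + (σ * δ₂ * n / r) • ν₂ from rfl,
      show n₂ = (-n / r) • ν₁ + (m / r) • ν₂ from rfl, g_bilin, h₁, h₂, h₁₂]
    field_simp
    linear_combination σ * m * n * hd2 - σ * m * n * hd1
  · rw [show n₁ = (σ * δ₁ * m / r) • ν₁ + (σ * δ₂ * n / r) • ν₂ from rfl,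
      show n₂ = (-n / r) • ν₁ + (m / r) • ν₂ from rfl, hprod_bilin]
    have h1 : σ * δ₁ * m / r * (m / r) - σ * δ₂ * n / r * (-n / r) = 1 := by
      field_simp
      linear_combination -hr2'
    rw [h1, one_smul]
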